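/- Let 𝕃 = (x_1^{d_1},...,x_h^{d_h}) ⊕ V be a d-LPP ideal in S = k[x_1,...,x_n] written as in the standard decomposition, and let D, D+1 be two consecutive degrees. Then the ideal generated by (x_1^{d_1},...,x_h^{d_h}) together with the vector space V_D ⊕ V_{D+1} is again a d-LPP ideal with the same graded components as 𝕃 in all degrees ≥ D+1 (after including the ideal generated by V_D, V_{D+1}) and equal to (x_1^{d_1},...,x_h^{d_h}) in degrees below D. -/
import Mathlib


open MvPolynomial

noncomputable section EGHDefs

/-- Total degree of an exponent vector. -/
def mdeg {n : ℕ} (a : Fin n →₀ ℕ) : ℕ := a.sum fun _ e => e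

/-- `monLT a b` : the monomial `x^a` is strictly smaller than `x^b` in the
lexicographic order with `x_1 > x_2 > ... > x_n`. -/
def monLT {n : ℕ} (a b : Fin n →₀ ℕ) : Prop :=
  ∃ i : Fin n, (∀ j : Fin n, j < i → a j = b j) ∧ a i < b i

/-- A lex-segment of exponent vectors in degree `j`. -/
def LexSeg {n : ℕ} (j : ℕ) (V : Set (Fin n →₀ ℕ)) : Prop :=
  (∀ a ∈ V, mdeg a = j) ∧ ∀ a ∈ V, ∀ b : Fin n →₀ ℕ, mdeg b = j → monLT a b → b ∈ V

variable (k : Type) [Field k] {n : ℕ}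

/-- Hilbert function of a (homogeneous) ideal `I`: the `k`-dimension of its degree `j` part. -/
def HF (I : Ideal (MvPolynomial (Fin n) k)) (j : ℕ) : ℕ :=
  Module.finrank k
    ↥(Submodule.restrictScalars k (I : Submodule (MvPolynomial (Fin n) k) (MvPolynomial (Fin n) k))
      ⊓ homogeneousSubmodule (Fin n) k j)

/-- Hilbert function of the quotient `S/I` in degree `j`. -/
def HFq (I : Ideal (MvPolynomial (Fin n) k)) (j : ℕ) : ℕ :=
  Module.finrank k
    ↥((homogeneousSubmodule (Fin n) k j).map (Ideal.Quotient.mkₐ k I).toLinearMap)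

/-- `I` is a homogeneous ideal. -/
def IsHomog (I : Ideal (MvPolynomial (Fin n) k)) : Prop :=
  ∀ f ∈ I, ∀ j : ℕ, homogeneousComponent j f ∈ I

/-- `f 0, f 1, ..., f (h-1)` is a regular sequence. -/
def IsRegSeq {h : ℕ} (f : Fin h → MvPolynomial (Fin n) k) : Prop :=
  Ideal.span (Set.range f) ≠ ⊤ ∧
  ∀ i : Fin h, ∀ g : MvPolynomial (Fin n) k,
    g * f i ∈ Ideal.span (f '' {j | j < i}) → g ∈ Ideal.span (f '' {j | j < i})

/-- The monomial complete intersection `(x_1^{d_1}, ..., x_h^{d_h})`. -/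
def powIdeal {h : ℕ} (hh : h ≤ n) (d : Fin h → ℕ) : Ideal (MvPolynomial (Fin n) k) :=
  Ideal.span (Set.range fun i : Fin h => (X (Fin.castLE hh i) : MvPolynomial (Fin n) k) ^ d i)

/-- `L` is a lexicographic (monomial) ideal. -/
def IsLexIdeal (L : Ideal (MvPolynomial (Fin n) k)) : Prop :=
  (∀ f ∈ L, ∀ a ∈ f.support, (monomial a (1 : k)) ∈ L) ∧
  ∀ a b : Fin n →₀ ℕ, mdeg a = mdeg b → monLT a b →
    (monomial a (1 : k)) ∈ L → monomial b (1 : k) ∈ L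

/-- `𝕃` is a `d`-LPP (lex-plus-power) ideal. -/
def IsLPP {h : ℕ} (hh : h ≤ n) (d : Fin h → ℕ) (𝕃 : Ideal (MvPolynomial (Fin n) k)) : Prop :=
  ∃ L : Ideal (MvPolynomial (Fin n) k), IsLexIdeal k L ∧ 𝕃 = powIdeal k hh d ⊔ L

/-- `I` contains a regular sequence of degrees `d`. -/
def ContainsRS {h : ℕ} (d : Fin h → ℕ) (I : Ideal (MvPolynomial (Fin n) k)) : Prop :=
  ∃ f : Fin h → MvPolynomial (Fin n) k,
    IsRegSeq k f ∧ (∀ i, (f i).IsHomogeneous (d i)) ∧ ∀ i, f i ∈ I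

/-- `I` satisfies the Eisenbud-Green-Harris conjecture for the degree sequence `d`:
there is a `d`-LPP ideal with the same Hilbert function as `I`. -/
def EGH {h : ℕ} (hh : h ≤ n) (d : Fin h → ℕ) (I : Ideal (MvPolynomial (Fin n) k)) : Prop :=
  ∃ 𝕃 : Ideal (MvPolynomial (Fin n) k), IsLPP k hh d 𝕃 ∧ ∀ j : ℕ, HF k 𝕃 j = HF k I j

end EGHDefs

namespace Stmt13Aux
noncomputable section

variable {n : ℕ}

lemma mdeg_eq (a : Fin n →₀ ℕ) : mdeg a = ∑ i, a i :=
  Finsupp.sum_fintype _ _ (fun _ => rfl)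

lemma mdeg_eq_degree (a : Fin n →₀ ℕ) : mdeg a = a.degree := rfl

lemma mdeg_mono {a b : Fin n →₀ ℕ} (h : a ≤ b) : mdeg a ≤ mdeg b := by
  rw [mdeg_eq, mdeg_eq]
  exact Finset.sum_le_sum fun i _ => h i

lemma mdeg_add (a b : Fin n →₀ ℕ) : mdeg (a + b) = mdeg a + mdeg b := by
  simp [mdeg_eq, Finsupp.add_apply, Finset.sum_add_distrib]

lemma mdeg_single (i : Fin n) (e : ℕ) : mdeg (Finsupp.single i e) = e :=
  Finsupp.sum_single_index rfl

/-- partial sums of an exponent vector over indices `< i`. -/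
def psum13 (f : Fin n →₀ ℕ) (i : ℕ) : ℕ :=
  ∑ j ∈ Finset.univ.filter (fun j : Fin n => (j : ℕ) < i), f j

lemma psum_zero (f : Fin n →₀ ℕ) : psum13 f 0 = 0 := by simp [psum13]

lemma psum_succ_lt (f : Fin n →₀ ℕ) {i : ℕ} (h : i < n) :
    psum13 f (i + 1) = psum13 f i + f ⟨i, h⟩ := by
  unfold psum13
  have : (Finset.univ.filter (fun j : Fin n => (j : ℕ) < i + 1)) =
      insert (⟨i, h⟩ : Fin n) (Finset.univ.filter (fun j : Fin n => (j : ℕ) < i)) := by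
    ext j
    simp only [Finset.mem_filter, Finset.mem_univ, true_and, Finset.mem_insert, Fin.ext_iff]
    omega
  rw [this, Finset.sum_insert (by simp)]
  ring

lemma psum_succ_fin (f : Fin n →₀ ℕ) (i : Fin n) :
    psum13 f ((i : ℕ) + 1) = psum13 f (i : ℕ) + f i := by
  simpa using psum_succ_lt f i.isLt

lemma psum_succ_ge (f : Fin n →₀ ℕ) {i : ℕ} (h : ¬ i < n) :
    psum13 f (i + 1) = psum13 f i := by
  unfold psum13
  apply Finset.sum_congr _ (fun _ _ => rfl)
  ext j
  simp only [Finset.mem_filter, Finset.mem_univ, true_and]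
  have := j.isLt
  omega

lemma psum_mono (f : Fin n →₀ ℕ) {i j : ℕ} (h : i ≤ j) : psum13 f i ≤ psum13 f j := by
  apply Finset.sum_le_sum_of_subset
  intro x
  simp only [Finset.mem_filter, Finset.mem_univ, true_and]
  omega

lemma psum_n (f : Fin n →₀ ℕ) : psum13 f n = mdeg f := by
  rw [mdeg_eq]
  unfold psum13
  apply Finset.sum_congr _ (fun _ _ => rfl)
  ext j; simp [j.isLt]

lemma psum_le_mdeg (f : Fin n →₀ ℕ) (i : ℕ) : psum13 f i ≤ mdeg f := by
  rw [← psum_n]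
  apply Finset.sum_le_sum_of_subset
  intro x
  simp only [Finset.mem_filter, Finset.mem_univ, true_and]
  exact fun _ => x.isLt

lemma apply_eq_zero_of_psum_eq {f : Fin n →₀ ℕ} {i : ℕ} (h : psum13 f (i + 1) = mdeg f)
    {j : Fin n} (hj : i < (j : ℕ)) : f j = 0 := by
  have h1 : psum13 f ((j : ℕ) + 1) = psum13 f (j : ℕ) + f j := psum_succ_lt f j.isLt
  have h2 : psum13 f ((j : ℕ) + 1) ≤ mdeg f := psum_le_mdeg f _
  have h3 : psum13 f (i + 1) ≤ psum13 f (j : ℕ) := psum_mono f (by omega)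
  omega

lemma psum_congr {f g : Fin n →₀ ℕ} {i : ℕ} (h : ∀ j : Fin n, (j : ℕ) < i → f j = g j) :
    psum13 f i = psum13 g i := by
  apply Finset.sum_congr rfl
  intro j hj
  simp only [Finset.mem_filter, Finset.mem_univ, true_and] at hj
  exact h j hj

/-- greedy lex-largest sub-exponent-vector of total degree `m`. -/
def trunc (m : ℕ) (a : Fin n →₀ ℕ) : Fin n →₀ ℕ :=
  Finsupp.equivFunOnFinite.symm (fun i => min (a i) (m - psum13 a (i : ℕ)))

lemma trunc_apply (m : ℕ) (a : Fin n →₀ ℕ) (i : Fin n) :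
    trunc m a i = min (a i) (m - psum13 a (i : ℕ)) := rfl

lemma trunc_le (m : ℕ) (a : Fin n →₀ ℕ) : trunc m a ≤ a := by
  intro i
  rw [trunc_apply]
  exact min_le_left _ _

lemma psum_trunc (m : ℕ) (a : Fin n →₀ ℕ) (i : ℕ) :
    psum13 (trunc m a) i = min (psum13 a i) m := by
  induction i with
  | zero => simp [psum_zero]
  | succ i ih =>
    rcases lt_or_ge i n with h | h
    · rw [psum_succ_lt _ h, psum_succ_lt a h, ih, trunc_apply]
      simp only [Fin.val_mk]
      omega
    · rw [psum_succ_ge _ (by omega), psum_succ_ge a (by omega), ih]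

lemma mdeg_trunc {m : ℕ} {a : Fin n →₀ ℕ} (h : m ≤ mdeg a) : mdeg (trunc m a) = m := by
  rw [← psum_n, psum_trunc, psum_n]
  omega

lemma exists_firstDiff {f g : Fin n →₀ ℕ} (h : f ≠ g) :
    ∃ i : Fin n, (∀ j, j < i → f j = g j) ∧ f i ≠ g i := by
  have hne : (Finset.univ.filter (fun i : Fin n => f i ≠ g i)).Nonempty := by
    by_contra hc
    rw [Finset.not_nonempty_iff_eq_empty, Finset.filter_eq_empty_iff] at hc
    exact h (Finsupp.ext fun i => by simpa using hc (Finset.mem_univ i))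
  refine ⟨(Finset.univ.filter (fun i : Fin n => f i ≠ g i)).min' hne, ?_, ?_⟩
  · intro j hj
    by_contra hc
    have hj2 : j ∈ Finset.univ.filter (fun i : Fin n => f i ≠ g i) := by
      simp only [Finset.mem_filter, Finset.mem_univ, true_and]; exact hc
    have := Finset.min'_le _ j hj2
    exact absurd (lt_of_lt_of_le hj this) (lt_irrefl j)
  · exact (Finset.mem_filter.mp (Finset.min'_mem _ hne)).2

/-- any sub-vector of degree `m` is lex-at-most the greedy truncation. -/
lemma lexle_trunc {m : ℕ} {s a : Fin n →₀ ℕ} (hs : s ≤ a) (hm : mdeg s = m) :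
    s = trunc m a ∨ monLT s (trunc m a) := by
  by_cases he : s = trunc m a
  · exact Or.inl he
  right
  obtain ⟨i, hagree, hne⟩ := exists_firstDiff he
  refine ⟨i, hagree, ?_⟩
  have hma : m ≤ mdeg a := hm ▸ mdeg_mono hs
  have hti : trunc m a i = min (a i) (m - psum13 a (i : ℕ)) := trunc_apply m a i
  rcases lt_or_ge (s i) (trunc m a i) with hlt | hge
  · exact hlt
  exfalso
  have hlt : trunc m a i < s i := lt_of_le_of_ne hge (Ne.symm hne)
  have hsa : s i ≤ a i := hs i
  have h1 : psum13 (trunc m a) ((i : ℕ) + 1) = psum13 (trunc m a) (i : ℕ) + trunc m a i :=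
    psum_succ_fin _ i
  have h2 : psum13 (trunc m a) (i : ℕ) = min (psum13 a (i : ℕ)) m := psum_trunc m a _
  have h4 : psum13 s ((i : ℕ) + 1) ≤ mdeg s := psum_le_mdeg s _
  have h5 : psum13 s ((i : ℕ) + 1) = psum13 s (i : ℕ) + s i := psum_succ_fin s i
  have h6 : psum13 s (i : ℕ) = psum13 (trunc m a) (i : ℕ) :=
    psum_congr (fun j hj => hagree j hj)
  omega

/-- greedy truncation is lex-monotone. -/
lemma trunc_lexle {m : ℕ} {a b : Fin n →₀ ℕ} (hab : monLT a b) (hma : m ≤ mdeg a)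
    (hmb : m ≤ mdeg b) : trunc m a = trunc m b ∨ monLT (trunc m a) (trunc m b) := by
  obtain ⟨i, hagree, hlt⟩ := hab
  have hpsi : psum13 a (i : ℕ) = psum13 b (i : ℕ) :=
    psum_congr (fun x hx => hagree x hx)
  have hbelow : ∀ j : Fin n, j < i → trunc m a j = trunc m b j := by
    intro j hj
    have : psum13 a (j : ℕ) = psum13 b (j : ℕ) :=
      psum_congr (fun x hx => hagree x (lt_trans hx hj))
    rw [trunc_apply, trunc_apply, hagree j hj, this]
  have hta : trunc m a i = min (a i) (m - psum13 a (i : ℕ)) := trunc_apply m a i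
  have htb : trunc m b i = min (b i) (m - psum13 b (i : ℕ)) := trunc_apply m b i
  rcases lt_or_ge (trunc m a i) (trunc m b i) with h | h
  · exact Or.inr ⟨i, hbelow, h⟩
  left
  have heq : trunc m a i = trunc m b i := by omega
  have h3a : psum13 (trunc m a) ((i : ℕ) + 1) = m := by
    rw [psum_succ_fin, psum_trunc]
    omega
  have h3b : psum13 (trunc m b) ((i : ℕ) + 1) = m := by
    rw [psum_succ_fin, psum_trunc]
    omega
  have hmta : mdeg (trunc m a) = m := mdeg_trunc hma
  have hmtb : mdeg (trunc m b) = m := mdeg_trunc hmb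
  ext j
  rcases lt_trichotomy j i with hj | hj | hj
  · exact hbelow j hj
  · rw [hj]; exact heq
  · rw [apply_eq_zero_of_psum_eq (h3a.trans hmta.symm) hj,
      apply_eq_zero_of_psum_eq (h3b.trans hmtb.symm) hj]

variable (k : Type) [Field k]

lemma mon_mem_span {A : Set (Fin n →₀ ℕ)} {b : Fin n →₀ ℕ} :
    monomial b (1 : k) ∈ Ideal.span ((fun a : Fin n →₀ ℕ => monomial a (1 : k)) '' A) ↔
      ∃ s ∈ A, s ≤ b := by
  rw [mem_ideal_span_monomial_image]
  constructor
  · intro hmem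
    exact hmem b (by simp)
  · rintro ⟨s, hsA, hsb⟩ c hc
    classical
    rw [support_monomial, if_neg one_ne_zero, Finset.mem_singleton] at hc
    subst hc
    exact ⟨s, hsA, hsb⟩

lemma monspan_supportClosed {A : Set (Fin n →₀ ℕ)} :
    ∀ f ∈ Ideal.span ((fun a : Fin n →₀ ℕ => monomial a (1 : k)) '' A),
      ∀ a ∈ f.support, monomial a (1 : k) ∈
        Ideal.span ((fun a : Fin n →₀ ℕ => monomial a (1 : k)) '' A) := by
  intro f hf a ha
  rw [mem_ideal_span_monomial_image] at hf
  exact (mon_mem_span k).mpr (hf a ha)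

lemma monspan_homog {A : Set (Fin n →₀ ℕ)} {f : MvPolynomial (Fin n) k} {j : ℕ}
    (hf : f ∈ Ideal.span ((fun a : Fin n →₀ ℕ => monomial a (1 : k)) '' A)) :
    homogeneousComponent j f ∈
      Ideal.span ((fun a : Fin n →₀ ℕ => monomial a (1 : k)) '' A) := by
  rw [mem_ideal_span_monomial_image] at hf ⊢
  intro c hc
  apply hf
  rw [mem_support_iff, coeff_homogeneousComponent] at hc
  rw [mem_support_iff]
  by_cases h : c.degree = j
  · rwa [if_pos h] at hc
  · rw [if_neg h] at hc; exact absurd rfl hc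

lemma mono_mem_sup {P L : Ideal (MvPolynomial (Fin n) k)}
    (hP : ∀ f ∈ P, ∀ a ∈ f.support, monomial a (1 : k) ∈ P)
    (hL : ∀ f ∈ L, ∀ a ∈ f.support, monomial a (1 : k) ∈ L)
    {b : Fin n →₀ ℕ} (hmem : monomial b (1 : k) ∈ P ⊔ L) :
    monomial b (1 : k) ∈ P ∨ monomial b (1 : k) ∈ L := by
  rw [Submodule.mem_sup] at hmem
  obtain ⟨p, hp, l, hl, hpl⟩ := hmem
  have hco : coeff b p + coeff b l = 1 := by
    rw [← coeff_add, hpl, coeff_monomial, if_pos rfl]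
  by_cases h : coeff b p = 0
  · right
    apply hL l hl
    rw [mem_support_iff]
    intro h0
    rw [h, h0] at hco
    simpa using hco
  · left
    exact hP p hp b (mem_support_iff.mpr h)

lemma mon_mul_mem {L : Ideal (MvPolynomial (Fin n) k)} {s a : Fin n →₀ ℕ}
    (h : monomial s (1 : k) ∈ L) (hs : s ≤ a) : monomial a (1 : k) ∈ L := by
  have : monomial a (1 : k) = monomial (a - s) (1 : k) * monomial s 1 := by
    rw [monomial_mul, one_mul, tsub_add_cancel_of_le hs]
  rw [this]
  exact Ideal.mul_mem_left _ _ h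

end
end Stmt13Aux


/-- truncating the "lex part" `V` of a `d`-LPP ideal `𝕃 = P ⊕ V` to the two
degrees `D, D+1` and generating an ideal again yields a `d`-LPP ideal, which agrees with
`P` in degrees `< D` and with `𝕃` in degrees `D` and `D + 1`. -/
theorem stmt13 (k : Type) [Field k] {n h : ℕ} (hh : h ≤ n)
    (d : Fin h → ℕ) (hmono : Monotone d) (hpos : ∀ i, 1 ≤ d i)
    (𝕃 : Ideal (MvPolynomial (Fin n) k)) (hL : IsLPP k hh d 𝕃) (D : ℕ)
    (V : Set (MvPolynomial (Fin n) k))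
    (hV : V = {m | ∃ a : Fin n →₀ ℕ, m = monomial a (1 : k) ∧
      (mdeg a = D ∨ mdeg a = D + 1) ∧ m ∈ 𝕃 ∧ m ∉ powIdeal k hh d})
    (𝕃₅ : Ideal (MvPolynomial (Fin n) k)) (h𝕃₅ : 𝕃₅ = powIdeal k hh d ⊔ Ideal.span V) :
    IsLPP k hh d 𝕃₅ ∧
    (∀ j : ℕ, j < D →
      Submodule.restrictScalars k (𝕃₅ : Submodule (MvPolynomial (Fin n) k) (MvPolynomial (Fin n) k))
          ⊓ homogeneousSubmodule (Fin n) k j =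
        Submodule.restrictScalars k
            ((powIdeal k hh d : Ideal (MvPolynomial (Fin n) k)) :
              Submodule (MvPolynomial (Fin n) k) (MvPolynomial (Fin n) k))
          ⊓ homogeneousSubmodule (Fin n) k j) ∧
    (∀ j : ℕ, j = D ∨ j = D + 1 →
      Submodule.restrictScalars k (𝕃₅ : Submodule (MvPolynomial (Fin n) k) (MvPolynomial (Fin n) k))
          ⊓ homogeneousSubmodule (Fin n) k j =
        Submodule.restrictScalars k (𝕃 : Submodule (MvPolynomial (Fin n) k) (MvPolynomial (Fin n) k))
          ⊓ homogeneousSubmodule (Fin n) k j) := by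
  classical
  obtain ⟨L, hlex, h𝕃⟩ := hL
  set P := powIdeal k hh d with hP
  -- `P` as a span of monomials
  have hPspan : P = Ideal.span ((fun a : Fin n →₀ ℕ => monomial a (1 : k)) ''
      Set.range (fun i : Fin h => Finsupp.single (Fin.castLE hh i) (d i))) := by
    rw [hP]
    unfold powIdeal
    congr 1
    rw [← Set.range_comp]
    apply congrArg
    funext i
    simp [Function.comp, X_pow_eq_monomial]
  have hPsupp : ∀ f ∈ P, ∀ a ∈ f.support, monomial a (1 : k) ∈ P := by
    rw [hPspan]; exact Stmt13Aux.monspan_supportClosed k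
  have hPhomog : ∀ j : ℕ, ∀ f ∈ P, homogeneousComponent j f ∈ P := by
    intro j f hf
    rw [hPspan] at hf ⊢
    exact Stmt13Aux.monspan_homog k hf
  -- `V` as an image of a set of exponents
  have hVimg : V = (fun a : Fin n →₀ ℕ => monomial a (1 : k)) ''
      {a : Fin n →₀ ℕ | (mdeg a = D ∨ mdeg a = D + 1) ∧
        monomial a (1 : k) ∈ 𝕃 ∧ monomial a (1 : k) ∉ P} := by
    rw [hV]
    ext m
    simp only [Set.mem_setOf_eq, Set.mem_image]
    constructor
    · rintro ⟨a, rfl, h1, h2, h3⟩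
      exact ⟨a, ⟨h1, h2, h3⟩, rfl⟩
    · rintro ⟨a, ⟨h1, h2, h3⟩, rfl⟩
      exact ⟨a, rfl, h1, h2, h3⟩
  have hPle : P ≤ 𝕃 := by rw [h𝕃]; exact le_sup_left
  have hLle : L ≤ 𝕃 := by rw [h𝕃]; exact le_sup_right
  have hVle : V ⊆ (𝕃 : Set (MvPolynomial (Fin n) k)) := by
    rw [hV]
    rintro m ⟨a, rfl, h1, h2, h3⟩
    exact h2
  have h𝕃₅le : 𝕃₅ ≤ 𝕃 := by
    rw [h𝕃₅]
    exact sup_le hPle (Ideal.span_le.mpr hVle)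
  -- the truncated lex ideal
  set T := {a : Fin n →₀ ℕ | (mdeg a = D ∨ mdeg a = D + 1) ∧ monomial a (1 : k) ∈ L} with hT
  set L' := Ideal.span ((fun a : Fin n →₀ ℕ => monomial a (1 : k)) '' T) with hL'def
  have hPL' : 𝕃₅ = P ⊔ L' := by
    rw [h𝕃₅]
    apply le_antisymm
    · apply sup_le le_sup_left
      rw [hVimg, Ideal.span_le]
      rintro m ⟨a, ⟨h1, h2, h3⟩, rfl⟩
      rw [h𝕃] at h2
      rcases Stmt13Aux.mono_mem_sup k hPsupp hlex.1 h2 with h | h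
      · exact absurd h h3
      · exact le_sup_right (a := P) (Ideal.subset_span ⟨a, ⟨h1, h⟩, rfl⟩)
    · apply sup_le le_sup_left
      rw [hL'def, Ideal.span_le]
      rintro m ⟨a, ⟨h1, h2⟩, rfl⟩
      by_cases hmp : monomial a (1 : k) ∈ P
      · exact le_sup_left (b := Ideal.span V) hmp
      · refine le_sup_right (a := P) (Ideal.subset_span ?_)
        rw [hVimg]
        exact ⟨a, ⟨h1, hLle h2, hmp⟩, rfl⟩
  have hlexL' : IsLexIdeal k L' := by
    constructor
    · intro f hf a ha
      rw [hL'def] at hf ⊢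
      exact Stmt13Aux.monspan_supportClosed k f hf a ha
    · intro a b hdeg hab ha
      rw [hL'def, Stmt13Aux.mon_mem_span] at ha ⊢
      obtain ⟨s, hsT, hsa⟩ := ha
      obtain ⟨hsd, hsL⟩ := hsT
      have hDa : D ≤ mdeg a := by
        have := Stmt13Aux.mdeg_mono hsa
        omega
      rcases le_or_gt (mdeg a) (D + 1) with hcase | hcase
      · have haL : monomial a (1 : k) ∈ L := Stmt13Aux.mon_mul_mem k hsL hsa
        have hbL : monomial b (1 : k) ∈ L := hlex.2 a b hdeg hab haL
        exact ⟨b, ⟨by omega, hbL⟩, le_refl b⟩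
      · obtain ⟨s', hs'd, hs'a, hs'L⟩ :
            ∃ s', mdeg s' = D + 1 ∧ s' ≤ a ∧ monomial s' (1 : k) ∈ L := by
          rcases hsd with h | h
          · have hne : ∃ i, s i < a i := by
              by_contra hc
              push_neg at hc
              have : a ≤ s := fun i => hc i
              have := Stmt13Aux.mdeg_mono this
              omega
            obtain ⟨i, hi⟩ := hne
            refine ⟨s + Finsupp.single i 1, ?_, ?_, ?_⟩
            · rw [Stmt13Aux.mdeg_add, Stmt13Aux.mdeg_single, h]
            · intro x
              rw [Finsupp.add_apply, Finsupp.single_apply]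
              by_cases hx : i = x
              · subst hx
                simpa using hi
              · rw [if_neg hx, add_zero]
                exact hsa x
            · have : monomial (s + Finsupp.single i 1) (1 : k) =
                  monomial s 1 * monomial (Finsupp.single i 1) 1 := by
                rw [monomial_mul, one_mul]
              rw [this]
              exact Ideal.mul_mem_right _ _ hsL
          · exact ⟨s, h, hsa, hsL⟩
        have h1 : D + 1 ≤ mdeg a := by omega
        have h1b : D + 1 ≤ mdeg b := by omega
        have hta : monomial (Stmt13Aux.trunc (D + 1) a) (1 : k) ∈ L := by
          rcases Stmt13Aux.lexle_trunc hs'a hs'd with he | hlt2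
          · rw [← he]; exact hs'L
          · exact hlex.2 _ _ (by rw [hs'd, Stmt13Aux.mdeg_trunc h1]) hlt2 hs'L
        have htb : monomial (Stmt13Aux.trunc (D + 1) b) (1 : k) ∈ L := by
          rcases Stmt13Aux.trunc_lexle hab h1 h1b with he | hlt2
          · rw [← he]; exact hta
          · exact hlex.2 _ _
              (by rw [Stmt13Aux.mdeg_trunc h1, Stmt13Aux.mdeg_trunc h1b]) hlt2 hta
        exact ⟨Stmt13Aux.trunc (D + 1) b, ⟨Or.inr (Stmt13Aux.mdeg_trunc h1b), htb⟩,
          Stmt13Aux.trunc_le _ _⟩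
  refine ⟨⟨L', hlexL', hPL'⟩, ?_, ?_⟩
  · -- degrees < D
    intro j hj
    ext f
    simp only [Submodule.mem_inf, Submodule.restrictScalars_mem]
    constructor
    · rintro ⟨hf1, hf2⟩
      refine ⟨?_, hf2⟩
      rw [h𝕃₅, Submodule.mem_sup] at hf1
      obtain ⟨p, hp, v, hv, rfl⟩ := hf1
      have hfh : homogeneousComponent j (p + v) = p + v := by
        have := homogeneousComponent_of_mem (m := j) hf2
        simpa using this
      have hv0 : homogeneousComponent j v = 0 := by
        apply homogeneousComponent_eq_zero'
        intro c hc
        rw [hVimg] at hv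
        rw [mem_ideal_span_monomial_image] at hv
        obtain ⟨s, hsA, hsc⟩ := hv c hc
        have hle := Stmt13Aux.mdeg_mono hsc
        have hd : mdeg s = D ∨ mdeg s = D + 1 := hsA.1
        rw [← Stmt13Aux.mdeg_eq_degree]
        omega
      rw [map_add, hv0, add_zero] at hfh
      rw [← hfh]
      exact hPhomog j p hp
    · rintro ⟨hf1, hf2⟩
      refine ⟨?_, hf2⟩
      rw [h𝕃₅]
      exact Ideal.mem_sup_left hf1
  · -- degrees D and D+1
    intro j hj
    ext f
    simp only [Submodule.mem_inf, Submodule.restrictScalars_mem]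
    constructor
    · rintro ⟨hf1, hf2⟩
      exact ⟨h𝕃₅le hf1, hf2⟩
    · rintro ⟨hf1, hf2⟩
      refine ⟨?_, hf2⟩
      rw [h𝕃, Submodule.mem_sup] at hf1
      obtain ⟨p, hp, l, hl, rfl⟩ := hf1
      have hfh : homogeneousComponent j (p + l) = p + l := by
        have := homogeneousComponent_of_mem (m := j) hf2
        simpa using this
      have hpm : homogeneousComponent j p ∈ 𝕃₅ := by
        rw [h𝕃₅]
        exact Ideal.mem_sup_left (hPhomog j p hp)
      have hlm : homogeneousComponent j l ∈ 𝕃₅ := by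
        rw [← support_sum_monomial_coeff (homogeneousComponent j l)]
        apply Ideal.sum_mem
        intro c hc
        have hcd : c.degree = j ∧ c ∈ l.support := by
          rw [mem_support_iff, coeff_homogeneousComponent] at hc
          by_cases h : c.degree = j
          · refine ⟨h, ?_⟩
            rw [if_pos h] at hc
            exact mem_support_iff.mpr hc
          · rw [if_neg h] at hc
            exact absurd rfl hc
        have hmonoL : monomial c (1 : k) ∈ L := hlex.1 l hl c hcd.2
        have hrw : monomial c (coeff c (homogeneousComponent j l)) =
            C (coeff c (homogeneousComponent j l)) * monomial c 1 := by
          rw [C_mul_monomial, mul_one]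
        rw [hrw]
        apply Ideal.mul_mem_left
        by_cases hcP : monomial c (1 : k) ∈ P
        · rw [h𝕃₅]
          exact Ideal.mem_sup_left hcP
        · rw [h𝕃₅]
          refine Ideal.mem_sup_right (Ideal.subset_span ?_)
          rw [hVimg]
          refine ⟨c, ⟨?_, hLle hmonoL, hcP⟩, rfl⟩
          rw [Stmt13Aux.mdeg_eq_degree, hcd.1]
          omega
      rw [← hfh, map_add]
      exact Ideal.add_mem _ hpm hlm
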